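/- Let X ∈ ℂ^{n×n} be a Hermitian positive semi-definite matrix with eigenvalues λ₁ ≥ λ₂ ≥ ⋯ ≥ λ_n ≥ 0, let c > 0, and let 1 ≤ ℓ ≤ n. Then for every F ∈ ℂ^{n×ℓ} with orthonormal columns (FᴴF = I_ℓ), det(I_ℓ + c·Fᴴ X F) ≤ ∏_{i=1}^{ℓ} (1 + c·λ_i); moreover, if the columns of F are orthonormal eigenvectors of X associated with the ℓ largest eigenvalues λ₁, …, λ_ℓ, then det(I_ℓ + c·Fᴴ X F) = ∏_{i=1}^{ℓ} (1 + c·λ_i). -/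

import Mathlib

open Matrix
open scoped ComplexOrder


noncomputable def subdet {n ℓ : ℕ} (W : Matrix (Fin n) (Fin ℓ) ℂ) (S : Finset (Fin n)) : ℂ :=
  if h : S.card = ℓ then (W.submatrix (fun i => S.orderEmbOfFin h i) id).det else 0

theorem strictMono_coe_le {ℓ n : ℕ} {g : Fin ℓ → Fin n} (hg : StrictMono g) (i : Fin ℓ) :
    (i : ℕ) ≤ (g i : ℕ) := by
  have key : ∀ m : ℕ, ∀ i : Fin ℓ, (i : ℕ) = m → m ≤ (g i : ℕ) := by
    intro m
    induction m with
    | zero => intro i _; exact Nat.zero_le _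
    | succ m ih =>
      intro i hi
      have hm : m < ℓ := by omega
      have hj := ih ⟨m, hm⟩ rfl
      have h2 : g ⟨m, hm⟩ < g i := hg (by simp [Fin.lt_def, hi])
      have := Fin.lt_def.mp h2
      omega
  exact key _ i rfl

theorem cb_half {n ℓ : ℕ} (W : Matrix (Fin n) (Fin ℓ) ℂ) (d : Fin n → ℂ) :
    (Wᴴ * Matrix.diagonal d * W).det =
      ∑ f : Fin ℓ → Fin n,
        (∏ i, (starRingEnd ℂ (W (f i) i) * d (f i))) * (W.submatrix f id).det := by
  have hM : (Wᴴ * Matrix.diagonal d * W) =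
      Matrix.of fun i => ∑ k : Fin n, (starRingEnd ℂ (W k i) * d k) • (W k) := by
    ext i j
    simp [Matrix.mul_apply, Matrix.diagonal, Matrix.conjTranspose_apply, Finset.sum_apply,
      Finset.mul_sum, mul_assoc]
  rw [hM]
  show (Matrix.detRowAlternating (fun i => ∑ k : Fin n, (starRingEnd ℂ (W k i) * d k) • (W k)) : ℂ) = _
  have h1 := MultilinearMap.map_sum
    ((Matrix.detRowAlternating : (Fin ℓ → ℂ) [⋀^Fin ℓ]→ₗ[ℂ] ℂ).toMultilinearMap)
    (fun i k => (starRingEnd ℂ (W k i) * d k) • (W k))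
  rw [show (Matrix.detRowAlternating (fun i => ∑ k : Fin n, (starRingEnd ℂ (W k i) * d k) • (W k)) : ℂ)
      = (Matrix.detRowAlternating : (Fin ℓ → ℂ) [⋀^Fin ℓ]→ₗ[ℂ] ℂ).toMultilinearMap
        (fun i => ∑ k : Fin n, (starRingEnd ℂ (W k i) * d k) • (W k)) from rfl, h1]
  refine Finset.sum_congr rfl fun f _ => ?_
  rw [MultilinearMap.map_smul_univ]
  rfl

theorem fiber_eq {n ℓ : ℕ} (S : Finset (Fin n)) (hcard : S.card = ℓ) (t : (Fin ℓ → Fin n) → ℂ) :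
    ∑ f ∈ (Finset.univ.filter (fun f : Fin ℓ → Fin n => Function.Injective f)).filter
        (fun f => Finset.image f Finset.univ = S), t f
      = ∑ σ : Equiv.Perm (Fin ℓ), t ((fun i => S.orderEmbOfFin hcard i) ∘ σ) := by
  set g : Fin ℓ → Fin n := fun i => S.orderEmbOfFin hcard i with hgdef
  have hginj : Function.Injective g := (S.orderEmbOfFin hcard).injective
  have hgmem : ∀ i, g i ∈ S := fun i => Finset.orderEmbOfFin_mem S hcard i
  have himg : Finset.image g Finset.univ = S := by
    ext k
    simp only [Finset.mem_image, Finset.mem_univ, true_and]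
    constructor
    · rintro ⟨i, rfl⟩; exact hgmem i
    · intro hk
      have hk' : k ∈ Set.range (S.orderEmbOfFin hcard) := by
        rw [Finset.range_orderEmbOfFin]; exact hk
      obtain ⟨i, hi⟩ := hk'; exact ⟨i, hi⟩
  have memS : ∀ (f : Fin ℓ → Fin n), Finset.image f Finset.univ = S → ∀ i, f i ∈ S := by
    intro f hf i; rw [← hf]; exact Finset.mem_image_of_mem f (Finset.mem_univ i)
  refine (Finset.sum_bij'
    (i := fun (σ : Equiv.Perm (Fin ℓ)) _ => g ∘ σ)
    (j := fun f hf => Equiv.ofBijective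
      (fun i => (S.orderIsoOfFin hcard).symm
        ⟨f i, memS f (Finset.mem_filter.mp hf).2 i⟩)
      (Finite.injective_iff_bijective.mp (fun a b hab => by
        have h1 : Function.Injective f :=
          (Finset.mem_filter.mp (Finset.mem_filter.mp hf).1).2
        apply h1
        have := congrArg (fun x => ((S.orderIsoOfFin hcard) x : Fin n)) hab
        simpa using this)))
    ?_ ?_ ?_ ?_ ?_).symm
  · intro σ _
    rw [Finset.mem_filter, Finset.mem_filter]
    refine ⟨⟨Finset.mem_univ _, hginj.comp σ.injective⟩, ?_⟩
    rw [← himg]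
    ext k
    simp only [Finset.mem_image, Finset.mem_univ, true_and, Function.comp_apply]
    constructor
    · rintro ⟨i, rfl⟩; exact ⟨σ i, rfl⟩
    · rintro ⟨i, rfl⟩; exact ⟨σ.symm i, by simp⟩
  · intro f hf; exact Finset.mem_univ _
  · intro σ _
    apply Equiv.ext
    intro i
    simp only [Equiv.ofBijective_apply]
    apply hginj
    show g _ = g (σ i)
    have : ∀ x : S, g ((S.orderIsoOfFin hcard).symm x) = (x : Fin n) := by
      intro x
      show ((S.orderIsoOfFin hcard) ((S.orderIsoOfFin hcard).symm x) : Fin n) = _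
      simp
    rw [this]; rfl
  · intro f hf
    funext i
    simp only [Function.comp_apply, Equiv.ofBijective_apply]
    show ((S.orderIsoOfFin hcard) ((S.orderIsoOfFin hcard).symm _) : Fin n) = f i
    simp
  · intro σ _; rfl
theorem cb_full {n ℓ : ℕ} (W : Matrix (Fin n) (Fin ℓ) ℂ) (d : Fin n → ℂ) :
    (Wᴴ * Matrix.diagonal d * W).det =
      ∑ S ∈ Finset.powersetCard ℓ (Finset.univ : Finset (Fin n)),
        (∏ k ∈ S, d k) * (starRingEnd ℂ (subdet W S) * subdet W S) := by
  rw [cb_half]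
  set t : (Fin ℓ → Fin n) → ℂ := fun f =>
    (∏ i, (starRingEnd ℂ (W (f i) i) * d (f i))) * (W.submatrix f id).det with ht
  have h0 : ∀ f ∈ (Finset.univ : Finset (Fin ℓ → Fin n)), t f ≠ 0 → Function.Injective f := by
    intro f _ hne
    by_contra hinj
    apply hne
    simp only [Function.Injective, not_forall] at hinj
    obtain ⟨i, j, hfij, hij⟩ := hinj
    have hz : (W.submatrix f id).det = 0 :=
      Matrix.det_zero_of_row_eq hij (by ext k; simp [Matrix.submatrix_apply, hfij])
    simp [ht, hz]
  rw [← Finset.sum_filter_of_ne h0]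
  have hmaps : ∀ f ∈ Finset.univ.filter (fun f : Fin ℓ → Fin n => Function.Injective f),
      Finset.image f Finset.univ ∈ Finset.powersetCard ℓ (Finset.univ : Finset (Fin n)) := by
    intro f hf
    rw [Finset.mem_filter] at hf
    rw [Finset.mem_powersetCard]
    exact ⟨Finset.subset_univ _, by rw [Finset.card_image_of_injective _ hf.2]; simp⟩
  rw [← Finset.sum_fiberwise_of_maps_to hmaps t]
  refine Finset.sum_congr rfl fun S hS => ?_
  have hcard : S.card = ℓ := (Finset.mem_powersetCard.mp hS).2
  rw [fiber_eq S hcard t]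
  set g : Fin ℓ → Fin n := fun i => S.orderEmbOfFin hcard i with hgdef
  have hginj : Function.Injective g := (S.orderEmbOfFin hcard).injective
  have hgmem : ∀ i, g i ∈ S := fun i => Finset.orderEmbOfFin_mem S hcard i
  have himg : Finset.image g Finset.univ = S := by
    ext k
    simp only [Finset.mem_image, Finset.mem_univ, true_and]
    constructor
    · rintro ⟨i, rfl⟩; exact hgmem i
    · intro hk
      have hk2 : k ∈ Set.range (S.orderEmbOfFin hcard) := by
        rw [Finset.range_orderEmbOfFin]; exact hk
      obtain ⟨i, hi⟩ := hk2; exact ⟨i, hi⟩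
  have hsub : subdet W S = (W.submatrix g id).det := by rw [subdet, dif_pos hcard]
  have hSprod : ∏ k ∈ S, d k = ∏ i, d (g i) := by
    rw [← himg, Finset.prod_image (fun a _ b _ h => hginj h)]
  have hdet : ∀ σ : Equiv.Perm (Fin ℓ), (W.submatrix (g ∘ σ) id).det =
      ((Equiv.Perm.sign σ : ℤ) : ℂ) * (W.submatrix g id).det := by
    intro σ
    have h := Matrix.det_permute σ (W.submatrix g id)
    rw [Matrix.submatrix_submatrix] at h
    simpa using h
  have step1 : ∑ σ : Equiv.Perm (Fin ℓ), t (g ∘ σ)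
      = (∏ k ∈ S, d k) * (W.submatrix g id).det *
        ∑ σ : Equiv.Perm (Fin ℓ),
          ((Equiv.Perm.sign σ : ℤ) : ℂ) * ∏ i, starRingEnd ℂ (W (g (σ i)) i) := by
    rw [Finset.mul_sum]
    refine Finset.sum_congr rfl fun σ _ => ?_
    have hprod : (∏ i, (starRingEnd ℂ (W ((g ∘ σ) i) i) * d ((g ∘ σ) i)))
        = (∏ i, starRingEnd ℂ (W (g (σ i)) i)) * ∏ i, d (g i) := by
      rw [Finset.prod_mul_distrib]
      congr 1
      exact Equiv.prod_comp σ (fun i => d (g i))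
    show (∏ i, (starRingEnd ℂ (W ((g ∘ σ) i) i) * d ((g ∘ σ) i))) * (W.submatrix (g ∘ σ) id).det = _
    rw [hprod, hdet σ, hSprod]
    ring
  have step2 : ∑ σ : Equiv.Perm (Fin ℓ),
      ((Equiv.Perm.sign σ : ℤ) : ℂ) * ∏ i, starRingEnd ℂ (W (g (σ i)) i)
      = starRingEnd ℂ ((W.submatrix g id).det) := by
    rw [Matrix.det_apply, map_sum]
    refine Finset.sum_congr rfl fun σ _ => ?_
    rw [Units.smul_def, zsmul_eq_mul, _root_.map_mul, _root_.map_prod, map_intCast]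
    rfl
  rw [step1, step2, hsub]
  ring

/-- for a Hermitian PSD matrix `X` with eigenvalues `λ₁ ≥ ⋯ ≥ λₙ ≥ 0`
(given by an orthonormal eigenbasis `v`), every semi-unitary `F` with `ℓ` columns satisfies
`det(I + c FᴴXF) ≤ ∏_{i≤ℓ} (1 + c λᵢ)`, with equality when the columns of `F` are the
leading `ℓ` eigenvectors. -/
theorem leading_eigenvectors_maximize_logdet (n ℓ : ℕ) (hn : 1 ≤ n) (hℓ : 1 ≤ ℓ)
    (hℓn : ℓ ≤ n) (c : ℝ) (hc : 0 < c)
    (X : Matrix (Fin n) (Fin n) ℂ) (hX : X.PosSemidef)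
    (lam : Fin n → ℝ) (hanti : Antitone lam) (hnonneg : ∀ i, 0 ≤ lam i)
    (v : Fin n → Fin n → ℂ)
    (hortho : ∀ i j, dotProduct (star (v i)) (v j) = if i = j then 1 else 0)
    (heig : ∀ i, X.mulVec (v i) = (lam i : ℂ) • v i) :
    (∀ F : Matrix (Fin n) (Fin ℓ) ℂ, Fᴴ * F = 1 →
      (((1 : Matrix (Fin ℓ) (Fin ℓ) ℂ) + c • (Fᴴ * X * F)).det).re ≤
        ∏ i : Fin ℓ, (1 + c * lam (Fin.castLE hℓn i))) ∧
    (∀ F : Matrix (Fin n) (Fin ℓ) ℂ, (∀ j i, F j i = v (Fin.castLE hℓn i) j) →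
      ((1 : Matrix (Fin ℓ) (Fin ℓ) ℂ) + c • (Fᴴ * X * F)).det =
        ((∏ i : Fin ℓ, (1 + c * lam (Fin.castLE hℓn i)) : ℝ) : ℂ)) := by
  -- common computation: F with orthonormal eigen-columns gives diagonal FᴴXF
  have hdiagF : ∀ F : Matrix (Fin n) (Fin ℓ) ℂ, (∀ j i, F j i = v (Fin.castLE hℓn i) j) →
      Fᴴ * X * F = Matrix.diagonal (fun i => ((lam (Fin.castLE hℓn i) : ℝ) : ℂ)) := by
    intro F hF
    ext i j
    have hXF : (X * F) = Matrix.of fun k j => (lam (Fin.castLE hℓn j) : ℂ) * v (Fin.castLE hℓn j) k := by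
      ext k j
      have := congrFun (heig (Fin.castLE hℓn j)) k
      simp only [Matrix.mulVec, dotProduct, Pi.smul_apply, smul_eq_mul] at this
      simp only [Matrix.mul_apply, Matrix.of_apply]
      rw [← this]
      exact Finset.sum_congr rfl fun k' _ => by rw [hF k' j]
    rw [Matrix.mul_assoc, hXF]
    have horth := hortho (Fin.castLE hℓn i) (Fin.castLE hℓn j)
    simp only [dotProduct, Pi.star_apply, RCLike.star_def] at horth
    simp only [Matrix.mul_apply, Matrix.conjTranspose_apply, Matrix.of_apply,
      Matrix.diagonal_apply]
    have : ∑ k, star (F k i) * ((lam (Fin.castLE hℓn j) : ℂ) * v (Fin.castLE hℓn j) k)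
        = (lam (Fin.castLE hℓn j) : ℂ) *
          ∑ k, (starRingEnd ℂ) (v (Fin.castLE hℓn i) k) * v (Fin.castLE hℓn j) k := by
      rw [Finset.mul_sum]
      refine Finset.sum_congr rfl fun k _ => ?_
      rw [hF k i,
        show (star (v (Fin.castLE hℓn i) k)) = (starRingEnd ℂ) (v (Fin.castLE hℓn i) k) from rfl]
      ring
    rw [this, horth]
    by_cases hij : i = j
    · simp [hij]
    · have hne : ¬ (Fin.castLE hℓn i = Fin.castLE hℓn j) :=
        fun h => hij (Fin.castLE_injective hℓn h)
      simp [hij, hne]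
  have hdiagdet : ∀ F : Matrix (Fin n) (Fin ℓ) ℂ, (∀ j i, F j i = v (Fin.castLE hℓn i) j) →
      ((1 : Matrix (Fin ℓ) (Fin ℓ) ℂ) + c • (Fᴴ * X * F)).det =
        ((∏ i : Fin ℓ, (1 + c * lam (Fin.castLE hℓn i)) : ℝ) : ℂ) := by
    intro F hF
    rw [hdiagF F hF]
    have : (1 : Matrix (Fin ℓ) (Fin ℓ) ℂ) +
        c • Matrix.diagonal (fun i => ((lam (Fin.castLE hℓn i) : ℝ) : ℂ))
        = Matrix.diagonal (fun i => ((1 + c * lam (Fin.castLE hℓn i) : ℝ) : ℂ)) := by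
      ext i j
      by_cases hij : i = j
      · subst hij
        simp only [Matrix.add_apply, Matrix.smul_apply, Matrix.one_apply_eq,
          Matrix.diagonal_apply_eq, Complex.real_smul]
        push_cast; ring
      · simp [Matrix.one_apply, Matrix.diagonal_apply, hij]
    rw [this, Matrix.det_diagonal]
    push_cast
    rfl
  refine ⟨?_, hdiagdet⟩
  -- Part 1
  intro F hFF
  -- eigendecomposition
  set U : Matrix (Fin n) (Fin n) ℂ := Matrix.of fun j i => v i j with hUdef
  have hU : Uᴴ * U = 1 := by
    ext i j
    have horth := hortho i j
    simp only [dotProduct, Pi.star_apply, RCLike.star_def] at horth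
    simp only [Matrix.mul_apply, Matrix.conjTranspose_apply, Matrix.one_apply, hUdef,
      Matrix.of_apply]
    rw [← horth]
    rfl
  have hUU : U * Uᴴ = 1 := mul_eq_one_comm.mp hU
  have hXU : X * U = U * Matrix.diagonal (fun i => ((lam i : ℝ) : ℂ)) := by
    ext j i
    have := congrFun (heig i) j
    simp only [Matrix.mulVec, dotProduct, Pi.smul_apply, smul_eq_mul] at this
    simp only [Matrix.mul_apply, hUdef, Matrix.of_apply, Matrix.diagonal_apply]
    rw [show (∑ k, X j k * v i k) = (lam i : ℂ) * v i j from this]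
    rw [Finset.sum_eq_single i (fun b _ hb => by simp [hb]) (by simp)]
    simp [mul_comm]
  have hXdec : X = U * Matrix.diagonal (fun i => ((lam i : ℝ) : ℂ)) * Uᴴ := by
    calc X = X * (U * Uᴴ) := by rw [hUU, Matrix.mul_one]
    _ = (X * U) * Uᴴ := by rw [Matrix.mul_assoc]
    _ = _ := by rw [hXU]
  set W : Matrix (Fin n) (Fin ℓ) ℂ := Uᴴ * F with hWdef
  have hWW : Wᴴ * W = 1 := by
    rw [hWdef, Matrix.conjTranspose_mul, Matrix.conjTranspose_conjTranspose]
    calc Fᴴ * U * (Uᴴ * F) = Fᴴ * (U * Uᴴ) * F := by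
          simp only [Matrix.mul_assoc]
    _ = 1 := by rw [hUU, Matrix.mul_one, hFF]
  set dp : Fin n → ℂ := fun k => ((1 + c * lam k : ℝ) : ℂ) with hdp
  have hkey : (1 : Matrix (Fin ℓ) (Fin ℓ) ℂ) + c • (Fᴴ * X * F)
      = Wᴴ * Matrix.diagonal dp * W := by
    have hd : Matrix.diagonal dp = (1 : Matrix (Fin n) (Fin n) ℂ) +
        c • Matrix.diagonal (fun i => ((lam i : ℝ) : ℂ)) := by
      ext i j
      by_cases hij : i = j
      · subst hij
        simp only [hdp, Matrix.add_apply, Matrix.smul_apply, Matrix.one_apply_eq,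
          Matrix.diagonal_apply_eq, Complex.real_smul]
        push_cast; ring
      · simp [Matrix.one_apply, Matrix.diagonal_apply, hij, hdp]
    rw [hd, Matrix.mul_add, Matrix.add_mul, Matrix.mul_one, hWW]
    congr 1
    rw [Matrix.mul_smul, Matrix.smul_mul]
    congr 1
    rw [hWdef, Matrix.conjTranspose_mul, Matrix.conjTranspose_conjTranspose, hXdec]
    simp only [Matrix.mul_assoc]
  rw [hkey, cb_full W dp]
  -- rewrite sum as real
  have hterm : ∀ S ∈ Finset.powersetCard ℓ (Finset.univ : Finset (Fin n)),
      (∏ k ∈ S, dp k) * (starRingEnd ℂ (subdet W S) * subdet W S)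
      = (((∏ k ∈ S, (1 + c * lam k)) * Complex.normSq (subdet W S) : ℝ) : ℂ) := by
    intro S _
    rw [show starRingEnd ℂ (subdet W S) * subdet W S = ((Complex.normSq (subdet W S) : ℝ) : ℂ) by
      rw [mul_comm, Complex.mul_conj]]
    rw [show (∏ k ∈ S, dp k) = (((∏ k ∈ S, (1 + c * lam k)) : ℝ) : ℂ) by
      rw [hdp]; push_cast; rfl]
    push_cast
    ring
  rw [Finset.sum_congr rfl hterm, ← Complex.ofReal_sum, Complex.ofReal_re]
  -- the weights sum to 1
  have hws : ∑ S ∈ Finset.powersetCard ℓ (Finset.univ : Finset (Fin n)),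
      Complex.normSq (subdet W S) = 1 := by
    have h1 := cb_full W (fun _ => (1 : ℂ))
    rw [show Matrix.diagonal (fun _ : Fin n => (1:ℂ)) = 1 from Matrix.diagonal_one] at h1
    rw [Matrix.mul_one] at h1
    rw [hWW] at h1
    rw [Matrix.det_one] at h1
    have h3 : ∑ S ∈ Finset.powersetCard ℓ (Finset.univ : Finset (Fin n)),
        ((Complex.normSq (subdet W S) : ℝ) : ℂ) = 1 := by
      calc ∑ S ∈ Finset.powersetCard ℓ (Finset.univ : Finset (Fin n)),
            ((Complex.normSq (subdet W S) : ℝ) : ℂ)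
          = ∑ S ∈ Finset.powersetCard ℓ (Finset.univ : Finset (Fin n)),
            (∏ _k ∈ S, (1:ℂ)) * (starRingEnd ℂ (subdet W S) * subdet W S) := by
            refine Finset.sum_congr rfl fun S _ => ?_
            rw [Finset.prod_const_one, one_mul, mul_comm, Complex.mul_conj]
        _ = 1 := h1.symm
    rw [← Complex.ofReal_sum] at h3
    exact_mod_cast h3
  -- bound each product
  have hbound : ∀ S ∈ Finset.powersetCard ℓ (Finset.univ : Finset (Fin n)),
      (∏ k ∈ S, (1 + c * lam k)) ≤ ∏ i : Fin ℓ, (1 + c * lam (Fin.castLE hℓn i)) := by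
    intro S hS
    have hcard : S.card = ℓ := (Finset.mem_powersetCard.mp hS).2
    set g : Fin ℓ → Fin n := fun i => S.orderEmbOfFin hcard i with hgdef
    have himg : ∏ k ∈ S, (1 + c * lam k) = ∏ i : Fin ℓ, (1 + c * lam (g i)) := by
      have himage : Finset.image g Finset.univ = S := by
        ext k
        simp only [Finset.mem_image, Finset.mem_univ, true_and]
        constructor
        · rintro ⟨i, rfl⟩; exact Finset.orderEmbOfFin_mem S hcard i
        · intro hk
          have hk2 : k ∈ Set.range (S.orderEmbOfFin hcard) := by
            rw [Finset.range_orderEmbOfFin]; exact hk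
          obtain ⟨i, hi⟩ := hk2; exact ⟨i, hi⟩
      rw [← himage, Finset.prod_image (fun a _ b _ h => (S.orderEmbOfFin hcard).injective h)]
    rw [himg]
    refine Finset.prod_le_prod (fun i _ => by nlinarith [hc.le, hnonneg (g i)]) (fun i _ => ?_)
    have hle : (Fin.castLE hℓn i) ≤ g i := by
      rw [Fin.le_def]
      exact strictMono_coe_le (S.orderEmbOfFin hcard).strictMono i
    have := hanti hle
    nlinarith [hc.le, this]
  calc ∑ S ∈ Finset.powersetCard ℓ (Finset.univ : Finset (Fin n)),
        (∏ k ∈ S, (1 + c * lam k)) * Complex.normSq (subdet W S)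
      ≤ ∑ S ∈ Finset.powersetCard ℓ (Finset.univ : Finset (Fin n)),
        (∏ i : Fin ℓ, (1 + c * lam (Fin.castLE hℓn i))) * Complex.normSq (subdet W S) := by
        refine Finset.sum_le_sum fun S hS => ?_
        exact mul_le_mul_of_nonneg_right (hbound S hS) (Complex.normSq_nonneg _)
    _ = ∏ i : Fin ℓ, (1 + c * lam (Fin.castLE hℓn i)) := by
        rw [← Finset.mul_sum, hws, mul_one]
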